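/- Let Γ₁ = {(r, r^{3/2}) : r ≥ 0} and Γ₃ = {(r, −r^{3/2}) : r ≥ 0} in ℝ², and define f(r) = inf{‖γ₁ − γ₃‖ : γ₁ ∈ Γ₁, γ₃ ∈ Γ₃, ‖γ₁‖ ≥ r, ‖γ₃‖ ≥ r} for small r > 0. Then Cont(Γ₁, Γ₃) = lim_{r→0⁺} log f(r)/log r = 3/2. -/
import Mathlib


open Set Filter

/-- The separation function `f_{Γ₁,Γ₂}(r)`. -/
noncomputable def sep {E : Type*} [NormedAddCommGroup E] (Γ₁ Γ₂ : Set E) (r : ℝ) : ℝ :=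
  sInf {d : ℝ | ∃ γ₁ ∈ Γ₁, ∃ γ₂ ∈ Γ₂, r ≤ ‖γ₁‖ ∧ r ≤ ‖γ₂‖ ∧ d = ‖γ₁ - γ₂‖}

/-- A point of `ℝ²` with given coordinates. -/
noncomputable def pt2 (a b : ℝ) : EuclideanSpace ℝ (Fin 2) :=
  (WithLp.equiv 2 (Fin 2 → ℝ)).symm ![a, b]

/-- The upper half-branch `{(r, r^{3/2}) : r ≥ 0}` of the real cusp `y² = x³`. -/
noncomputable def cuspUp : Set (EuclideanSpace ℝ (Fin 2)) :=
  {p | ∃ r : ℝ, 0 ≤ r ∧ p = pt2 r (r ^ ((3:ℝ)/2))}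

/-- The lower half-branch `{(r, -r^{3/2}) : r ≥ 0}`. -/
noncomputable def cuspDown : Set (EuclideanSpace ℝ (Fin 2)) :=
  {p | ∃ r : ℝ, 0 ≤ r ∧ p = pt2 r (-(r ^ ((3:ℝ)/2)))}

lemma norm_pt2 (a b : ℝ) : ‖pt2 a b‖ = Real.sqrt (a^2 + b^2) := by
  rw [EuclideanSpace.norm_eq]
  simp [pt2, Fin.sum_univ_two, sq_abs]

lemma pt2_sub (a b c d : ℝ) : pt2 a b - pt2 c d = pt2 (a-c) (b-d) := by
  ext i; fin_cases i <;> simp [pt2]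

lemma rpow32_sq {s : ℝ} (hs : 0 ≤ s) : (s ^ ((3:ℝ)/2))^2 = s^3 := by
  rw [← Real.rpow_natCast (s ^ ((3:ℝ)/2)) 2, ← Real.rpow_mul hs, ← Real.rpow_natCast s 3]
  norm_num

lemma mem_sepSet {r : ℝ} (hr : 0 ≤ r) :
    (2 * r ^ ((3:ℝ)/2)) ∈
      {d : ℝ | ∃ γ₁ ∈ cuspUp, ∃ γ₂ ∈ cuspDown, r ≤ ‖γ₁‖ ∧ r ≤ ‖γ₂‖ ∧ d = ‖γ₁ - γ₂‖} := by
  refine ⟨pt2 r (r ^ ((3:ℝ)/2)), ⟨r, hr, rfl⟩, pt2 r (-(r ^ ((3:ℝ)/2))), ⟨r, hr, rfl⟩, ?_, ?_, ?_⟩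
  · rw [norm_pt2]
    calc r = Real.sqrt (r^2) := (Real.sqrt_sq hr).symm
    _ ≤ _ := Real.sqrt_le_sqrt (le_add_of_nonneg_right (by positivity))
  · rw [norm_pt2]
    calc r = Real.sqrt (r^2) := (Real.sqrt_sq hr).symm
    _ ≤ _ := Real.sqrt_le_sqrt (le_add_of_nonneg_right (by positivity))
  · rw [pt2_sub, norm_pt2]
    rw [show r - r = 0 by ring, show r ^ ((3:ℝ)/2) - -r ^ ((3:ℝ)/2) = 2 * r ^ ((3:ℝ)/2) by ring]
    rw [show (0:ℝ)^2 + (2 * r ^ ((3:ℝ)/2))^2 = (2 * r ^ ((3:ℝ)/2))^2 by ring,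
      Real.sqrt_sq (by positivity)]

lemma sep_upper {r : ℝ} (hr : 0 ≤ r) : sep cuspUp cuspDown r ≤ 2 * r ^ ((3:ℝ)/2) := by
  apply csInf_le
  · exact ⟨0, by rintro d ⟨γ₁, _, γ₂, _, _, _, rfl⟩; positivity⟩
  · exact mem_sepSet hr

-- key pointwise bound
lemma branch_lb {r s : ℝ} (hr : 0 < r) (hr1 : r ≤ 1) (hs : 0 ≤ s)
    (h : r ≤ Real.sqrt (s^2 + s^3)) : (r^2/2) ^ ((3:ℝ)/4) ≤ s ^ ((3:ℝ)/2) := by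
  have h2 : r^2 ≤ s^2 + s^3 := by
    have := Real.sqrt_le_sqrt (Real.sq_sqrt (by positivity : (0:ℝ) ≤ s^2+s^3) ▸ le_refl (s^2+s^3))
    nlinarith [Real.sq_sqrt (show (0:ℝ) ≤ s^2+s^3 by positivity),
      Real.sqrt_nonneg (s^2+s^3), sq_nonneg (Real.sqrt (s^2+s^3) - r),
      mul_self_le_mul_self hr.le h]
  rcases le_or_gt 1 s with h1 | h1
  · calc (r^2/2) ^ ((3:ℝ)/4) ≤ 1 := by
          apply Real.rpow_le_one (by positivity) (by nlinarith) (by norm_num)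
    _ = (1:ℝ) ^ ((3:ℝ)/2) := (Real.one_rpow _).symm
    _ ≤ s ^ ((3:ℝ)/2) := Real.rpow_le_rpow zero_le_one h1 (by norm_num)
  · have hs2 : r^2/2 ≤ s^2 := by nlinarith
    calc (r^2/2) ^ ((3:ℝ)/4) ≤ (s^2) ^ ((3:ℝ)/4) :=
          Real.rpow_le_rpow (by positivity) hs2 (by norm_num)
    _ = s ^ ((3:ℝ)/2) := by
          rw [← Real.rpow_natCast s 2, ← Real.rpow_mul hs]; norm_num

lemma sep_lower {r : ℝ} (hr : 0 < r) (hr1 : r ≤ 1) :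
    2 * (r^2/2) ^ ((3:ℝ)/4) ≤ sep cuspUp cuspDown r := by
  apply le_csInf ⟨_, mem_sepSet hr.le⟩
  rintro d ⟨γ₁, ⟨s, hs, rfl⟩, γ₂, ⟨t, ht, rfl⟩, h1, h2, rfl⟩
  rw [norm_pt2, rpow32_sq hs] at h1
  rw [norm_pt2] at h2
  rw [show (-(t ^ ((3:ℝ)/2)))^2 = (t ^ ((3:ℝ)/2))^2 by ring, rpow32_sq ht] at h2
  have hb1 := branch_lb hr hr1 hs h1
  have hb2 := branch_lb hr hr1 ht h2
  rw [pt2_sub, norm_pt2]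
  have : s ^ ((3:ℝ)/2) - -t ^ ((3:ℝ)/2) = s ^ ((3:ℝ)/2) + t ^ ((3:ℝ)/2) := by ring
  rw [this]
  calc 2 * (r^2/2) ^ ((3:ℝ)/4) ≤ s ^ ((3:ℝ)/2) + t ^ ((3:ℝ)/2) := by linarith
  _ = Real.sqrt ((s ^ ((3:ℝ)/2) + t ^ ((3:ℝ)/2))^2) := (Real.sqrt_sq (by positivity)).symm
  _ ≤ _ := Real.sqrt_le_sqrt (by nlinarith [sq_nonneg (s - t)])


/-- The contact of the two half-branches of the real cusp `y² = x³` equals `3/2`. -/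
theorem cusp_contact :
    Tendsto (fun r : ℝ => Real.log (sep cuspUp cuspDown r) / Real.log r)
      (nhdsWithin 0 (Ioi 0)) (nhds (3 / 2)) := by
  have hloginv : Tendsto (fun r : ℝ => (Real.log r)⁻¹) (nhdsWithin 0 (Ioi 0)) (nhds 0) := by
    have T : Tendsto (fun r : ℝ => -Real.log r) (nhdsWithin 0 (Ioi 0)) atTop :=
      tendsto_neg_atBot_atTop.comp Real.tendsto_log_nhdsGT_zero
    have := T.inv_tendsto_atTop.neg
    simpa [inv_neg] using this
  have hmem : ∀ᶠ r : ℝ in nhdsWithin 0 (Ioi 0), r ∈ Ioo (0:ℝ) 1 :=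
    Ioo_mem_nhdsGT_of_mem ⟨le_refl 0, one_pos⟩
  have key : ∀ r : ℝ, r ∈ Ioo (0:ℝ) 1 →
      3/2 + Real.log 2 * (Real.log r)⁻¹ ≤ Real.log (sep cuspUp cuspDown r) / Real.log r ∧
      Real.log (sep cuspUp cuspDown r) / Real.log r ≤ 3/2 + (Real.log 2 / 4) * (Real.log r)⁻¹ := by
    rintro r ⟨hr0, hr1⟩
    have hL : Real.log r < 0 := Real.log_neg hr0 hr1
    have hLne : Real.log r ≠ 0 := ne_of_lt hL
    have hpos : 0 < 2 * (r^2/2) ^ ((3:ℝ)/4) := by positivity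
    have hsep_pos : 0 < sep cuspUp cuspDown r := lt_of_lt_of_le hpos (sep_lower hr0 hr1.le)
    have hub : Real.log (sep cuspUp cuspDown r) ≤ Real.log 2 + 3/2 * Real.log r := by
      calc Real.log (sep cuspUp cuspDown r) ≤ Real.log (2 * r ^ ((3:ℝ)/2)) :=
            Real.log_le_log hsep_pos (sep_upper hr0.le)
      _ = Real.log 2 + 3/2 * Real.log r := by
            rw [Real.log_mul two_ne_zero (by positivity), Real.log_rpow hr0]; try ring
    have hlb : Real.log 2 / 4 + 3/2 * Real.log r ≤ Real.log (sep cuspUp cuspDown r) := by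
      calc Real.log 2 / 4 + 3/2 * Real.log r
          = Real.log (2 * (r^2/2) ^ ((3:ℝ)/4)) := by
            rw [Real.log_mul two_ne_zero (by positivity), Real.log_rpow (by positivity),
              Real.log_div (by positivity) two_ne_zero, Real.log_pow]
            push_cast; try ring
      _ ≤ _ := Real.log_le_log hpos (sep_lower hr0 hr1.le)
    constructor
    · have e1 : 3/2 + Real.log 2 * (Real.log r)⁻¹ =
          (Real.log 2 + 3/2 * Real.log r) / Real.log r := by field_simp; ring
      rw [e1, div_le_div_right_of_neg hL]
      exact hub
    · have e2 : 3/2 + (Real.log 2 / 4) * (Real.log r)⁻¹ =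
          (Real.log 2 / 4 + 3/2 * Real.log r) / Real.log r := by field_simp; ring
      rw [e2, div_le_div_right_of_neg hL]
      exact hlb
  refine tendsto_of_tendsto_of_tendsto_of_le_of_le'
    (g := fun r : ℝ => 3/2 + Real.log 2 * (Real.log r)⁻¹)
    (h := fun r : ℝ => 3/2 + (Real.log 2 / 4) * (Real.log r)⁻¹) ?_ ?_
    (hmem.mono fun r hr => (key r hr).1) (hmem.mono fun r hr => (key r hr).2)
  · simpa using (tendsto_const_nhds.add (hloginv.const_mul (Real.log 2)))
  · simpa using (tendsto_const_nhds.add (hloginv.const_mul (Real.log 2 / 4)))
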